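/- If k is odd, then ∫₀¹ x^j ψ(x) dx = 1/(k(k+2)) for every j = 1, 2, …, k. -/
import Mathlib

open Polynomial intervalIntegral

noncomputable def Rn (n : ℕ) : Polynomial ℝ := X ^ n * (X - C 1) ^ n

lemma poly_ii_mul (p q : Polynomial ℝ) :
    IntervalIntegrable (fun x => p.eval x * q.eval x) MeasureTheory.volume (0:ℝ) 1 :=
  ((p.continuous).mul (q.continuous)).intervalIntegrable 0 1

lemma poly_ftc (p : Polynomial ℝ) :
    ∫ x in (0:ℝ)..1, (derivative p).eval x = p.eval 1 - p.eval 0 :=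
  intervalIntegral.integral_eq_sub_of_hasDerivAt (fun x _ => p.hasDerivAt x)
    ((p.derivative.continuous).intervalIntegrable 0 1)

lemma poly_parts (u v : Polynomial ℝ) :
    ∫ x in (0:ℝ)..1, u.eval x * (derivative v).eval x
      = u.eval 1 * v.eval 1 - u.eval 0 * v.eval 0
        - ∫ x in (0:ℝ)..1, (derivative u).eval x * v.eval x := by
  have h := poly_ftc (u * v)
  rw [derivative_mul] at h
  have hsplit : ∫ x in (0:ℝ)..1, (derivative u * v + u * derivative v).eval x
      = (∫ x in (0:ℝ)..1, (derivative u).eval x * v.eval x)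
        + ∫ x in (0:ℝ)..1, u.eval x * (derivative v).eval x := by
    simp only [eval_add, eval_mul]
    exact intervalIntegral.integral_add (poly_ii_mul _ _) (poly_ii_mul _ _)
  rw [hsplit, eval_mul, eval_mul] at h
  linarith

lemma Rn_deriv_eval_one (n m : ℕ) (h : m < n) : (derivative^[m] (Rn n)).eval 1 = 0 := by
  rw [Rn, iterate_derivative_mul, eval_finset_sum]
  apply Finset.sum_eq_zero
  intro i hi
  rw [Finset.mem_range] at hi
  rw [iterate_derivative_X_sub_pow]
  simp only [eval_smul, eval_mul, eval_pow, eval_sub, eval_X, eval_C, smul_eq_mul]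
  rw [sub_self, zero_pow (by omega : n - i ≠ 0)]
  ring

lemma Rn_deriv_eval_zero (n m : ℕ) (h : m < n) : (derivative^[m] (Rn n)).eval 0 = 0 := by
  rw [Rn, iterate_derivative_mul, eval_finset_sum]
  apply Finset.sum_eq_zero
  intro i hi
  rw [Finset.mem_range] at hi
  rw [iterate_derivative_X_pow_eq_smul]
  simp only [eval_smul, eval_mul, eval_pow, eval_sub, eval_X, eval_C, smul_eq_mul]
  rw [zero_pow (by omega : n - (m - i) ≠ 0)]
  ring

lemma orth_aux (n : ℕ) : ∀ j m, j ≤ m → m ≤ n → ∀ q : Polynomial ℝ, derivative^[j] q = 0 →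
    ∫ x in (0:ℝ)..1, q.eval x * (derivative^[m] (Rn n)).eval x = 0 := by
  intro j
  induction j with
  | zero =>
    intro m _ _ q hq
    rw [Function.iterate_zero_apply] at hq
    simp [hq]
  | succ j ih =>
    intro m hjm hmn q hq
    obtain ⟨m', rfl⟩ : ∃ m', m = m' + 1 := ⟨m - 1, by omega⟩
    rw [Function.iterate_succ_apply' derivative m' (Rn n), poly_parts,
      Rn_deriv_eval_one n m' (by omega), Rn_deriv_eval_zero n m' (by omega),
      ih m' (by omega) (by omega) (derivative q)
        (by rw [← Function.iterate_succ_apply]; exact hq)]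
    ring

lemma Ln_eval_one (n : ℕ) : (derivative^[n] (Rn n)).eval 1 = (n.factorial : ℝ) := by
  rw [Rn, iterate_derivative_mul, eval_finset_sum]
  rw [Finset.sum_eq_single n]
  · rw [Nat.sub_self, Nat.choose_self, iterate_derivative_X_sub_pow_self]
    simp
  · intro i hi hne
    rw [Finset.mem_range] at hi
    have hilt : i < n := by omega
    rw [iterate_derivative_X_sub_pow]
    simp only [eval_smul, eval_mul, eval_pow, eval_sub, eval_X, eval_C, smul_eq_mul]
    rw [sub_self, zero_pow (by omega : n - i ≠ 0)]
    ring
  · intro h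
    simp at h

lemma Ln'_eval_one (n : ℕ) :
    (derivative^[n + 1] (Rn n)).eval 1 = (n : ℝ) * (n + 1) * n.factorial := by
  rw [Rn, iterate_derivative_mul, eval_finset_sum]
  rw [Finset.sum_eq_single n]
  · rw [show n + 1 - n = 1 from by omega, Nat.choose_succ_self_right,
      iterate_derivative_X_sub_pow_self]
    simp only [Function.iterate_one, derivative_X_pow, eval_smul, eval_mul, eval_natCast,
      eval_pow, eval_X, eval_C, smul_eq_mul, one_pow, eval_C_mul]
    ring
  · intro i hi hne
    rw [Finset.mem_range] at hi
    rcases lt_or_ge i n with hilt | hige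
    · rw [iterate_derivative_X_sub_pow]
      simp only [eval_smul, eval_mul, eval_pow, eval_sub, eval_X, eval_C, smul_eq_mul]
      rw [sub_self, zero_pow (by omega : n - i ≠ 0)]
      ring
    · have : i = n + 1 := by omega
      subst this
      rw [iterate_derivative_X_sub_pow, Nat.descFactorial_eq_zero_iff_lt.mpr (by omega)]
      simp
  · intro h
    exact absurd (Finset.mem_range.mpr (by omega)) h

lemma Ln'_eval_zero (n : ℕ) (hn : 1 ≤ n) :
    (derivative^[n + 1] (Rn n)).eval 0 = (-1 : ℝ) ^ (n - 1) * ((n : ℝ) * (n + 1) * n.factorial) := by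
  rw [Rn, iterate_derivative_mul, eval_finset_sum]
  rw [Finset.sum_eq_single 1]
  · rw [show n + 1 - 1 = n from by omega, Nat.choose_one_right,
      iterate_derivative_X_pow_eq_smul, Nat.descFactorial_self, Nat.sub_self]
    simp only [Function.iterate_one, derivative_X_sub_C_pow, pow_zero, eval_smul, eval_mul,
      eval_natCast, eval_pow, eval_sub, eval_X, eval_C, eval_one, smul_eq_mul, eval_C_mul]
    rw [zero_sub]
    ring
  · intro i hi hne
    rw [Finset.mem_range] at hi
    rcases Nat.eq_zero_or_pos i with rfl | hipos
    · rw [Nat.sub_zero, iterate_derivative_X_pow_eq_smul,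
        Nat.descFactorial_eq_zero_iff_lt.mpr (by omega)]
      simp
    · have h2 : 2 ≤ i := by omega
      rw [iterate_derivative_X_pow_eq_smul]
      simp only [eval_smul, eval_mul, eval_pow, eval_sub, eval_X, eval_C, smul_eq_mul]
      rw [zero_pow (by omega : n - (n + 1 - i) ≠ 0)]
      ring
  · intro h
    exact absurd (Finset.mem_range.mpr (by omega)) h

/-- If k is odd, then ∫₀¹ x^j ψ(x) dx = 1/(k(k+2)) for j = 1,…,k. -/
theorem stmt_4 (k : ℕ) (hk : Odd k) (ψ : Polynomial ℝ)
    (hdeg : ψ.degree = (k : WithBot ℕ)) (h0 : ψ.eval 0 = 0) (h1 : ψ.eval 1 = 1)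
    (horth : ∀ p : Polynomial ℝ, p.degree ≤ (k : WithBot ℕ) → p.eval 0 = 0 → p.eval 1 = 0 →
      ∫ x in (0:ℝ)..1, ψ.eval x * p.eval x = 0) :
    ∀ j : ℕ, 1 ≤ j → j ≤ k →
      ∫ x in (0:ℝ)..1, x ^ j * ψ.eval x = 1 / ((k : ℝ) * (k + 2)) := by
  obtain ⟨a, ha⟩ := hk
  have hk1 : 1 ≤ k := by omega
  have hknd : ψ.natDegree = k := natDegree_eq_of_degree_eq_some hdeg
  set s : ℝ := ∫ x in (0:ℝ)..1, ψ.eval x with hs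
  set c : ℝ := ∫ x in (0:ℝ)..1, ψ.eval x * x with hc
  have iψ : IntervalIntegrable (fun x => ψ.eval x) MeasureTheory.volume (0:ℝ) 1 :=
    (ψ.continuous).intervalIntegrable 0 1
  have ix : IntervalIntegrable (fun x => ψ.eval x * x) MeasureTheory.volume (0:ℝ) 1 := by
    simpa using poly_ii_mul ψ X
  have star : ∀ p : Polynomial ℝ, p.natDegree ≤ k →
      ∫ x in (0:ℝ)..1, ψ.eval x * p.eval x = p.eval 0 * (s - c) + p.eval 1 * c := by
    intro p hp
    set q : Polynomial ℝ := p - C (p.eval 0) * (1 - X) - C (p.eval 1) * X with hqdef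
    have hq0 : q.eval 0 = 0 := by simp [hqdef]
    have hq1 : q.eval 1 = 0 := by simp [hqdef]
    have hqd : q.degree ≤ (k : WithBot ℕ) := by
      have hn : q.natDegree ≤ k := by
        refine le_trans (natDegree_sub_le _ _) ?_
        rw [max_le_iff]
        constructor
        · refine le_trans (natDegree_sub_le _ _) ?_
          rw [max_le_iff]
          refine ⟨hp, ?_⟩
          refine le_trans natDegree_mul_le ?_
          have h1X : ((1 : Polynomial ℝ) - X).natDegree ≤ 1 :=
            le_trans (natDegree_sub_le _ _) (by simp)
          simp only [natDegree_C]
          omega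
        · refine le_trans natDegree_mul_le ?_
          simp only [natDegree_C, natDegree_X]
          omega
      exact le_trans degree_le_natDegree (by exact_mod_cast hn)
    have hzero := horth q hqd hq0 hq1
    have i1 : IntervalIntegrable (fun x => ψ.eval x * p.eval x) MeasureTheory.volume (0:ℝ) 1 :=
      poly_ii_mul ψ p
    have e0 : ∫ x in (0:ℝ)..1, ψ.eval x * q.eval x
        = ∫ x in (0:ℝ)..1, (ψ.eval x * p.eval x
            - p.eval 0 * (ψ.eval x - ψ.eval x * x) - p.eval 1 * (ψ.eval x * x)) := by
      apply intervalIntegral.integral_congr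
      intro x _
      simp only [hqdef, eval_sub, eval_mul, eval_C, eval_one, eval_X]
      ring
    have e1 : ∫ x in (0:ℝ)..1, (ψ.eval x * p.eval x
          - p.eval 0 * (ψ.eval x - ψ.eval x * x) - p.eval 1 * (ψ.eval x * x))
        = (∫ x in (0:ℝ)..1, ψ.eval x * p.eval x) - p.eval 0 * (s - c) - p.eval 1 * c := by
      rw [intervalIntegral.integral_sub (i1.sub ((iψ.sub ix).const_mul _)) (ix.const_mul _),
        intervalIntegral.integral_sub i1 ((iψ.sub ix).const_mul _),
        intervalIntegral.integral_const_mul, intervalIntegral.integral_const_mul,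
        intervalIntegral.integral_sub iψ ix]
    rw [e0, e1] at hzero
    linarith
  have key : ∀ n : ℕ, k ≤ n → n ≤ k + 1 →
      (derivative^[n+1] (Rn n)).eval 0 * (s - c) + (derivative^[n+1] (Rn n)).eval 1 * c
        = (derivative^[n] (Rn n)).eval 1 := by
    intro n hkn hnk
    have hdegLp : (derivative^[n+1] (Rn n)).natDegree ≤ k := by
      have h2n : (Rn n).natDegree ≤ 2 * n := by
        rw [Rn]
        refine le_trans natDegree_mul_le ?_
        have hx : ((X : Polynomial ℝ) ^ n).natDegree ≤ n := by simp
        have hy : (((X : Polynomial ℝ) - C 1) ^ n).natDegree ≤ n := by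
          refine le_trans natDegree_pow_le ?_
          rw [natDegree_X_sub_C]
          omega
        omega
      have hit := natDegree_iterate_derivative (Rn n) (n+1)
      omega
    have hstar := star _ hdegLp
    rw [← hstar]
    rw [show derivative^[n+1] (Rn n) = derivative (derivative^[n] (Rn n)) from
      Function.iterate_succ_apply' _ _ _]
    rw [poly_parts, h1, h0]
    have horthL : ∫ x in (0:ℝ)..1, (derivative ψ).eval x * (derivative^[n] (Rn n)).eval x = 0 := by
      apply orth_aux n n n le_rfl le_rfl
      apply iterate_derivative_eq_zero
      have hne : ψ.natDegree ≠ 0 := by omega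
      have hlt := natDegree_derivative_lt hne
      omega
    rw [horthL]
    ring
  have key1 := key k le_rfl (by omega)
  have key2 := key (k+1) (by omega) le_rfl
  rw [Ln_eval_one, Ln'_eval_one, Ln'_eval_zero _ (by omega)] at key1 key2
  have hev : (-1 : ℝ) ^ (k - 1) = 1 := Even.neg_one_pow ⟨a, by omega⟩
  have hod : (-1 : ℝ) ^ (k + 1 - 1) = -1 := by
    rw [show k + 1 - 1 = k from by omega]
    exact Odd.neg_one_pow ⟨a, by omega⟩
  rw [hev] at key1
  rw [hod] at key2
  push_cast at key1 key2
  have hFne : ((k.factorial : ℝ)) ≠ 0 := by positivity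
  have hF2ne : (((k+1).factorial : ℝ)) ≠ 0 := by positivity
  have h1' : s * ((k : ℝ) * ((k : ℝ) + 1)) * (k.factorial : ℝ) = 1 * (k.factorial : ℝ) := by
    linear_combination key1
  have h1'' : s * ((k : ℝ) * ((k : ℝ) + 1)) = 1 := mul_right_cancel₀ hFne h1'
  have h2' : (2 * c - s) * (((k : ℝ) + 1) * ((k : ℝ) + 2)) * ((k+1).factorial : ℝ)
      = 1 * ((k+1).factorial : ℝ) := by
    linear_combination key2
  have h2'' : (2 * c - s) * (((k : ℝ) + 1) * ((k : ℝ) + 2)) = 1 := mul_right_cancel₀ hF2ne h2'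
  have h3 : c * ((k : ℝ) * ((k : ℝ) + 2)) * (2 * ((k : ℝ) + 1)) = 1 * (2 * ((k : ℝ) + 1)) := by
    linear_combination ((k : ℝ) + 2) * h1'' + (k : ℝ) * h2''
  have hkpos : (0 : ℝ) < k := by exact_mod_cast hk1
  have h4 : c * ((k : ℝ) * ((k : ℝ) + 2)) = 1 := mul_right_cancel₀ (by positivity) h3
  intro j hj1 hjk
  have hgoal : ∫ x in (0:ℝ)..1, x ^ j * ψ.eval x
      = ∫ x in (0:ℝ)..1, ψ.eval x * (X ^ j : Polynomial ℝ).eval x := by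
    apply intervalIntegral.integral_congr
    intro x _
    simp [mul_comm]
  rw [hgoal, star (X ^ j) (by simp [natDegree_X_pow]; omega)]
  simp only [eval_pow, eval_X, zero_pow (by omega : j ≠ 0), one_pow, zero_mul, one_mul, zero_add]
  rw [eq_div_iff (by positivity)]
  linarith [h4]
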